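/- arXiv:1711.07176 — 4 statements merged into one kernel-verified Lean document; each statement's English description precedes it below -/
import Mathlib

section
/- Let 𝐣 be a reduced word obtained from the reduced word 𝐢 for w₀ by a 2-move or a 3-move at position k, and let R: ℝ_{>0}^N → ℝ_{>0}^N be the corresponding Lusztig transition map. Then for every a ∈ [n] and every x ∈ ℝ_{>0}^N one has Σ_{ℓ∈[N], j_ℓ=a} (R(x))_ℓ = Σ_{ℓ∈[N], i_ℓ=a} x_ℓ; that is, the functions κ_{𝐢,a}(x) = Σ_{k∈[N], i_k=a} x_k satisfy κ_{𝐣,a} ∘ R = κ_{𝐢,a}. -/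
open Finset

/-- The Coxeter matrix attached to a simply-laced (symmetric) Cartan matrix `c`. -/
def cartanToCoxeter {n : ℕ} (c : Fin n → Fin n → ℤ) (hsymm : ∀ a b, c a b = c b a) :
    CoxeterMatrix (Fin n) where
  M := Matrix.of fun a b => if a = b then 1 else if c a b = 0 then 2 else 3
  isSymm := by
    ext a b
    simp only [Matrix.transpose_apply, Matrix.of_apply]
    rw [hsymm a b]
    by_cases h : a = b
    · simp [h]
    · simp [h, Ne.symm h]
  diagonal := by intro a; simp
  off_diagonal := by
    intro a b hab
    simp only [Matrix.of_apply, if_neg hab]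
    split <;> omega

/-- The index set `M = {-1, …, -n} ∪ {1, …, N}` as a finite set of integers. -/
noncomputable def Mfin (n N : ℕ) : Finset ℤ := Finset.Icc (-(n : ℤ)) (-1) ∪ Finset.Icc 1 (N : ℤ)

/-- The negative index `-a ∈ M` attached to a letter `a ∈ [n]` (`a : Fin n` is `a+1 ∈ [n]`). -/
def negIdx {n : ℕ} (a : Fin n) : ℤ := -((a : ℕ) : ℤ) - 1

/-- The word `(i_1, …, i_N)` as a list of letters. -/
def wordOf {n : ℕ} (N : ℕ) (i : ℤ → Fin n) : List (Fin n) :=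
  (List.range N).map fun t => i ((t : ℤ) + 1)

/-- `kp` is the function `k ↦ k⁺`: the smallest `ℓ ∈ M` with `ℓ > k` and `i_ℓ = i_k`,
and `N+1` if no such `ℓ` exists. -/
def IsSucc {n : ℕ} (N : ℕ) (i : ℤ → Fin n) (kp : ℤ → ℤ) : Prop :=
  ∀ k ∈ Mfin n N, k < kp k ∧
    ((kp k = (N : ℤ) + 1 ∧ ∀ ℓ ∈ Mfin n N, k < ℓ → i ℓ ≠ i k) ∨
      (kp k ∈ Mfin n N ∧ i (kp k) = i k ∧ ∀ ℓ ∈ Mfin n N, k < ℓ → i ℓ = i k → kp k ≤ ℓ))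

/-- `km` is the function `k ↦ k⁻` (for `k ∈ [N]`): the largest `ℓ ∈ M` with `ℓ < k` and
`i_ℓ = i_k`. -/
def IsPred {n : ℕ} (N : ℕ) (i : ℤ → Fin n) (km : ℤ → ℤ) : Prop :=
  ∀ k : ℤ, 1 ≤ k → k ≤ (N : ℤ) →
    km k ∈ Mfin n N ∧ km k < k ∧ i (km k) = i k ∧
      ∀ ℓ ∈ Mfin n N, ℓ < k → i ℓ = i k → ℓ ≤ km k

/-- `m a` is the number of occurrences of the letter `a` in the word `i`. -/
def IsMult {n : ℕ} (N : ℕ) (i : ℤ → Fin n) (m : Fin n → ℕ) : Prop :=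
  ∀ a : Fin n, m a = ((Finset.Icc 1 (N : ℤ)).filter fun k => i k = a).card

/-- `pos a r` is `k(a,r)`, the position of the `r`-th occurrence of the letter `a`. -/
def IsPos {n : ℕ} (N : ℕ) (i : ℤ → Fin n) (m : Fin n → ℕ) (pos : Fin n → ℕ → ℤ) : Prop :=
  ∀ a : Fin n, ∀ r : ℕ, 1 ≤ r → r ≤ m a →
    pos a r ∈ Finset.Icc 1 (N : ℤ) ∧ i (pos a r) = a ∧
      ((Finset.Icc 1 (pos a r)).filter fun k => i k = a).card = r

/-- `j` is obtained from `i` by a 2-move at position `k`. -/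
def IsTwoMove {n : ℕ} (N : ℕ) (c : Fin n → Fin n → ℤ) (i j : ℤ → Fin n) (k : ℤ) : Prop :=
  1 ≤ k ∧ k + 1 ≤ (N : ℤ) ∧
  (∀ ℓ : ℤ, 1 ≤ ℓ → ℓ ≤ (N : ℤ) → ℓ ≠ k → ℓ ≠ k + 1 → j ℓ = i ℓ) ∧
  j k = i (k + 1) ∧ j (k + 1) = i k ∧ c (i k) (i (k + 1)) = 0

/-- `j` is obtained from `i` by a 3-move at position `k`. -/
def IsThreeMove {n : ℕ} (N : ℕ) (c : Fin n → Fin n → ℤ) (i j : ℤ → Fin n) (k : ℤ) : Prop :=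
  2 ≤ k ∧ k + 1 ≤ (N : ℤ) ∧
  (∀ ℓ : ℤ, 1 ≤ ℓ → ℓ ≤ (N : ℤ) → ℓ ≠ k - 1 → ℓ ≠ k → ℓ ≠ k + 1 → j ℓ = i ℓ) ∧
  j (k - 1) = i k ∧ j (k + 1) = i k ∧ j k = i (k - 1) ∧ i (k - 1) = i (k + 1) ∧
  c (i k) (i (k + 1)) = -1

/-- The transition map swapping the coordinates `k` and `k+1` (2-move transition map). -/
noncomputable def swapMap (k : ℤ) (x : ℤ → ℝ) : ℤ → ℝ := fun ℓ =>
  if ℓ = k then x (k + 1) else if ℓ = k + 1 then x k else x ℓ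

/-- The Lusztig transition map of a 3-move at position `k`. -/
noncomputable def lusR3 (k : ℤ) (x : ℤ → ℝ) : ℤ → ℝ := fun ℓ =>
  if ℓ = k - 1 then x k * x (k + 1) / (x (k - 1) + x (k + 1))
  else if ℓ = k then x (k - 1) + x (k + 1)
  else if ℓ = k + 1 then x (k - 1) * x k / (x (k - 1) + x (k + 1))
  else x ℓ

/-- The string transition map of a 3-move at position `k`. -/
noncomputable def strS3 (k : ℤ) (x : ℤ → ℝ) : ℤ → ℝ := fun ℓ =>
  if ℓ = k - 1 then x k * x (k + 1) / (x (k - 1) * x (k + 1) + x k)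
  else if ℓ = k then x (k - 1) * x (k + 1)
  else if ℓ = k + 1 then (x (k - 1) * x (k + 1) + x k) / x (k + 1)
  else x ℓ

/-- The function `ν_{𝐢,a}`. -/
noncomputable def nuFun {n : ℕ} (N : ℕ) (c : Fin n → Fin n → ℤ) (i : ℤ → Fin n)
    (lam : Fin n → ℝ) (x : ℤ → ℝ) (a : Fin n) : ℝ :=
  lam a * ∑ k ∈ (Finset.Icc 1 (N : ℤ)).filter (fun k => i k = a),
    (x k)⁻¹ * ∏ ℓ ∈ Finset.Ioc k (N : ℤ), x ℓ ^ (-(c (i ℓ) a))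

/-- The function `ν^∨_{𝐢,a}`. -/
noncomputable def nuDual {n : ℕ} (N : ℕ) (c : Fin n → Fin n → ℤ) (i : ℤ → Fin n)
    (lam : Fin n → ℝ) (x : ℤ → ℝ) (a : Fin n) : ℝ :=
  (∏ b : Fin n, lam b ^ (c a b)) * ∑ k ∈ (Finset.Icc 1 (N : ℤ)).filter (fun k => i k = a),
    (x k)⁻¹ * ∏ ℓ ∈ Finset.Ioc k (N : ℤ), x ℓ ^ (-(c (i ℓ) a))

/-- The map `grι_𝐢 : ℝ_{>0}^{[n]} × ℝ_{>0}^{[N]} → ℝ_{>0}^M`. -/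
noncomputable def grIota {n : ℕ} (N : ℕ) (star : Fin n → Fin n) (i : ℤ → Fin n) (kp : ℤ → ℤ)
    (lam : Fin n → ℝ) (x : ℤ → ℝ) : ℤ → ℝ := fun k =>
  if k < 0 then (x (kp k))⁻¹
  else if kp k ≤ (N : ℤ) then x k * (x (kp k))⁻¹
  else x k * (lam (star (i k)))⁻¹

/-- The map `gr𝒞_𝐢 : ℝ_{>0}^{[n]} × ℝ_{>0}^{[N]} → ℝ_{>0}^M`. -/
noncomputable def grC {n : ℕ} (N : ℕ) (c : Fin n → Fin n → ℤ) (i : ℤ → Fin n) (kp : ℤ → ℤ)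
    (pos : Fin n → ℕ → ℤ) (lam : Fin n → ℝ) (x : ℤ → ℝ) : ℤ → ℝ := fun k =>
  if k < 0 then
    (lam (i k))⁻¹ * x (pos (i k) 1) *
      ∏ ℓ ∈ (Finset.Icc 1 (N : ℤ)).filter (fun ℓ => pos (i k) 1 < ℓ), x ℓ ^ (c (i ℓ) (i k))
  else if kp k ≤ (N : ℤ) then
    (x k)⁻¹ * (x (kp k))⁻¹ * ∏ ℓ ∈ Finset.Ioo k (kp k), x ℓ ^ (-(c (i ℓ) (i k)))
  else (x k)⁻¹ * ∏ ℓ ∈ Finset.Ioc k (N : ℤ), x ℓ ^ (-(c (i ℓ) (i k)))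

/-- The λ-components of the map `grCA_𝐢 : ℝ_{>0}^M → ℝ_{>0}^{[n]} × ℝ_{>0}^{[N]}`. -/
noncomputable def grCALam {n : ℕ} (star : Fin n → Fin n) (m : Fin n → ℕ)
    (pos : Fin n → ℕ → ℤ) (x : ℤ → ℝ) : Fin n → ℝ := fun a =>
  (x (pos (star a) (m (star a))))⁻¹

/-- The x-components of the map `grCA_𝐢 : ℝ_{>0}^M → ℝ_{>0}^{[n]} × ℝ_{>0}^{[N]}`. -/
noncomputable def grCAX {n : ℕ} (N : ℕ) (c : Fin n → Fin n → ℤ) (i : ℤ → Fin n)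
    (kp km : ℤ → ℤ) (x : ℤ → ℝ) : ℤ → ℝ := fun k =>
  (x k)⁻¹ * (x (km k))⁻¹ *
    ∏ ℓ ∈ (Mfin n N).filter (fun ℓ => ℓ < k ∧ k < kp ℓ ∧ i ℓ ≠ i k), x ℓ ^ (-(c (i ℓ) (i k)))

/-- The λ-components of the map `ι*_𝐢 : ℝ_{>0}^M → ℝ_{>0}^{[n]} × ℝ_{>0}^{[N]}`. -/
noncomputable def iotaStarLam {n : ℕ} (m : Fin n → ℕ) (pos : Fin n → ℕ → ℤ)
    (x : ℤ → ℝ) : Fin n → ℝ := fun a => (x (pos a (m a)))⁻¹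

/-- The x-components of the map `ι*_𝐢 : ℝ_{>0}^M → ℝ_{>0}^{[n]} × ℝ_{>0}^{[N]}`. -/
noncomputable def iotaStarX (km : ℤ → ℤ) (x : ℤ → ℝ) : ℤ → ℝ := fun k => x (km k) * (x k)⁻¹

/-- The GHKK potential summand `W̃_{-a,𝐢}` on the chart of `𝐢`. -/
noncomputable def WNeg {n : ℕ} (m : Fin n → ℕ) (pos : Fin n → ℕ → ℤ) (y : ℤ → ℝ)
    (a : Fin n) : ℝ :=
  ∑ k ∈ Finset.range (m a), ∏ ℓ ∈ Finset.range (k + 1),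
    (if ℓ = 0 then y (negIdx a) else y (pos a ℓ))⁻¹

/-- The GHKK potential summand `W̃_{i_N,𝐢}` on the chart of `𝐢`. -/
noncomputable def WLast (N : ℕ) (y : ℤ → ℝ) : ℝ := (y (N : ℤ))⁻¹

/-- The Berenstein–Kazhdan decoration summand `f̃_{-a,𝐢}` on the chart of `𝐢`. -/
noncomputable def fNeg {n : ℕ} (N : ℕ) (c : Fin n → Fin n → ℤ) (i : ℤ → Fin n)
    (kp km : ℤ → ℤ) (x : ℤ → ℝ) (a : Fin n) : ℝ :=
  ∑ k ∈ (Finset.Icc 1 (N : ℤ)).filter (fun k => i k = a),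
    (x (km k))⁻¹ * (x k)⁻¹ *
      ∏ ℓ ∈ (Mfin n N).filter (fun ℓ => ℓ < k ∧ k < kp ℓ), x ℓ ^ (-(c (i ℓ) a))

/-- The Berenstein–Kazhdan decoration summand `f̃_{i_N,𝐢}` on the chart of `𝐢`. -/
noncomputable def fLast (N : ℕ) (km : ℤ → ℤ) (x : ℤ → ℝ) : ℝ :=
  x (km (N : ℤ)) * (x (N : ℤ))⁻¹

/-- A vertex of `Γ_𝐢` is frozen iff it is a negative index or a last occurrence. -/
def frozenIdx (N : ℕ) (kp : ℤ → ℤ) (k : ℤ) : Prop := k < 0 ∨ kp k = (N : ℤ) + 1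

instance (N : ℕ) (kp : ℤ → ℤ) : DecidablePred (frozenIdx N kp) := fun k => by
  unfold frozenIdx; infer_instance

/-- The number of arrows from `u` to `v` in the quiver `Γ_𝐢`. -/
noncomputable def gammaArrows {n : ℕ} (N : ℕ) (c : Fin n → Fin n → ℤ) (i : ℤ → Fin n) (kp : ℤ → ℤ) :
    ℤ → ℤ → ℕ := fun u v =>
  if u ∈ Mfin n N ∧ v ∈ Mfin n N ∧ ¬(frozenIdx N kp u ∧ frozenIdx N kp v) ∧
      (v = kp u ∨ (1 ≤ v ∧ v < u ∧ u ≤ (N : ℤ) ∧ u < kp v ∧ kp v < kp u ∧ c (i u) (i v) < 0))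
  then 1 else 0

/-- Quiver mutation at the vertex `k` on arrow-counting functions: steps (i)–(ii) produce `A'`,
truncated subtraction removes a maximal collection of 2-cycles, and arrows between two frozen
vertices are erased. -/
def mutate (frozen : ℤ → Prop) [DecidablePred frozen] (k : ℤ) (A : ℤ → ℤ → ℕ) :
    ℤ → ℤ → ℕ := fun u v =>
  let A' : ℤ → ℤ → ℕ := fun u' v' =>
    if u' = k then A v' k else if v' = k then A k u' else A u' v' + A u' k * A k v'
  if frozen u ∧ frozen v then 0 else A' u v - A' v u

/-- The quiver `Γ^{(j)}` obtained from `Γ_𝐢` by mutating at `v_{k(a,1)}, …, v_{k(a,j)}`. -/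
noncomputable def gammaIter {n : ℕ} (N : ℕ) (c : Fin n → Fin n → ℤ) (i : ℤ → Fin n) (kp : ℤ → ℤ)
    (pos : Fin n → ℕ → ℤ) (a : Fin n) : ℕ → ℤ → ℤ → ℕ
  | 0 => gammaArrows N c i kp
  | (r + 1) => mutate (frozenIdx N kp) (pos a (r + 1)) (gammaIter N c i kp pos a r)

/-- The skew-symmetrized arrow count `ε_{u,v}`. -/
def epsQ (A : ℤ → ℤ → ℕ) (u v : ℤ) : ℤ := (A u v : ℤ) - (A v u : ℤ)

/-- The `A`-cluster mutation at the vertex `k` on points. -/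
noncomputable def muAPoint {n : ℕ} (N : ℕ) (A : ℤ → ℤ → ℕ) (k : ℤ) (x : ℤ → ℝ) :
    ℤ → ℝ := fun u =>
  if u = k then
    (x k)⁻¹ * ((∏ ℓ ∈ (Mfin n N).filter (fun ℓ => 0 < epsQ A ℓ k), x ℓ ^ (epsQ A ℓ k)) +
      (∏ ℓ ∈ (Mfin n N).filter (fun ℓ => epsQ A ℓ k < 0), x ℓ ^ (-(epsQ A ℓ k))))
  else x u

/-- The `X`-cluster mutation at the vertex `k` on points. -/
noncomputable def muXPoint (A : ℤ → ℤ → ℕ) (k : ℤ) (x : ℤ → ℝ) : ℤ → ℝ := fun u =>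
  if u = k then (x k)⁻¹
  else x u * (1 + x k ^ (-(Int.sign (epsQ A k u)))) ^ (-(epsQ A k u))

/-- The transposition of the indices `k` and `k+1`. -/
def swapIdx (k : ℤ) (u : ℤ) : ℤ := if u = k then k + 1 else if u = k + 1 then k else u

/-- Extension of a tuple indexed by a finite set of integers by `0`. -/
def extZ {s : Finset ℤ} (x : {k : ℤ // k ∈ s} → ℤ) : ℤ → ℤ := fun k =>
  if h : k ∈ s then x ⟨k, h⟩ else 0

/-- invariance of the functions κ_{𝐢,a} under Lusztig transition maps of
2-moves and 3-moves. -/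
theorem statement0
    (n N : ℕ) (hn : 1 ≤ n)
    (c : Fin n → Fin n → ℤ)
    (hdiag : ∀ a, c a a = 2)
    (hsymm : ∀ a b, c a b = c b a)
    (hoff : ∀ a b, a ≠ b → c a b = 0 ∨ c a b = -1)
    (W : Type) [Group W]
    (cs : CoxeterSystem (cartanToCoxeter c hsymm) W)
    (w0 : W)
    (hlong : ∀ w : W, cs.length w ≤ cs.length w0)
    (hN : cs.length w0 = N)
    (i : ℤ → Fin n)
    (hredi : cs.wordProd (wordOf N i) = w0)
    (j : ℤ → Fin n)
    (hredj : cs.wordProd (wordOf N j) = w0)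
    (k : ℤ) (R : (ℤ → ℝ) → (ℤ → ℝ))
    (hmove : (IsTwoMove N c i j k ∧ R = swapMap k) ∨
             (IsThreeMove N c i j k ∧ R = lusR3 k)) :
    ∀ (a : Fin n) (x : ℤ → ℝ), (∀ ℓ ∈ Finset.Icc 1 (N : ℤ), 0 < x ℓ) →
      ∑ ℓ ∈ (Finset.Icc 1 (N : ℤ)).filter (fun ℓ => j ℓ = a), R x ℓ =
        ∑ ℓ ∈ (Finset.Icc 1 (N : ℤ)).filter (fun ℓ => i ℓ = a), x ℓ := by
  intro a x hx
  rw [Finset.sum_filter, Finset.sum_filter]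
  rcases hmove with ⟨⟨hk1, hk2, hout, hjk, hjk1, hc⟩, hR⟩ | ⟨⟨hk1, hk2, hout, hjm, hjp, hjj, hii, hc⟩, hR⟩
  · subst hR
    have hT : ({k, k + 1} : Finset ℤ) ⊆ Finset.Icc 1 (N : ℤ) := by
      intro u hu
      simp only [Finset.mem_insert, Finset.mem_singleton] at hu
      rcases hu with rfl | rfl <;> simp <;> omega
    rw [← Finset.sum_sdiff hT, ← Finset.sum_sdiff hT
      (f := fun ℓ => if i ℓ = a then x ℓ else 0)]
    congr 1
    · apply Finset.sum_congr rfl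
      intro u hu
      simp only [Finset.mem_sdiff, Finset.mem_insert, Finset.mem_singleton,
        Finset.mem_Icc] at hu
      obtain ⟨⟨h1, h2⟩, h3⟩ := hu
      push_neg at h3
      rw [hout u h1 h2 h3.1 h3.2]
      unfold swapMap
      rw [if_neg h3.1, if_neg h3.2]
    · rw [Finset.sum_pair (by omega : k ≠ k + 1),
        Finset.sum_pair (by omega : k ≠ k + 1)]
      unfold swapMap
      rw [hjk, hjk1]
      simp only [if_pos rfl, if_neg (by omega : k + 1 ≠ k)]
      exact add_comm _ _
  · subst hR
    have hxm : 0 < x (k - 1) := hx _ (by simp; omega)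
    have hxp : 0 < x (k + 1) := hx _ (by simp; omega)
    have hs : x (k - 1) + x (k + 1) ≠ 0 := by positivity
    have hne : i k ≠ i (k - 1) := by
      intro h
      rw [hii] at h
      rw [← h, hdiag] at hc
      omega
    have hT : ({k - 1, k, k + 1} : Finset ℤ) ⊆ Finset.Icc 1 (N : ℤ) := by
      intro u hu
      simp only [Finset.mem_insert, Finset.mem_singleton] at hu
      rcases hu with rfl | rfl | rfl <;> simp <;> omega
    rw [← Finset.sum_sdiff hT, ← Finset.sum_sdiff hT
      (f := fun ℓ => if i ℓ = a then x ℓ else 0)]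
    congr 1
    · apply Finset.sum_congr rfl
      intro u hu
      simp only [Finset.mem_sdiff, Finset.mem_insert, Finset.mem_singleton,
        Finset.mem_Icc] at hu
      obtain ⟨⟨h1, h2⟩, h3⟩ := hu
      push_neg at h3
      rw [hout u h1 h2 h3.1 h3.2.1 h3.2.2]
      unfold lusR3
      rw [if_neg h3.1, if_neg h3.2.1, if_neg h3.2.2]
    · have e1 : ∀ f : ℤ → ℝ, ∑ u ∈ ({k - 1, k, k + 1} : Finset ℤ), f u =
          f (k - 1) + (f k + f (k + 1)) := by
        intro f
        rw [show ({k - 1, k, k + 1} : Finset ℤ) = insert (k - 1) {k, k + 1} from rfl,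
          Finset.sum_insert (by simp; omega), Finset.sum_pair (by omega : k ≠ k + 1)]
      have L1 : lusR3 k x (k - 1) = x k * x (k + 1) / (x (k - 1) + x (k + 1)) := by
        unfold lusR3; rw [if_pos rfl]
      have L2 : lusR3 k x k = x (k - 1) + x (k + 1) := by
        unfold lusR3; rw [if_neg (by omega), if_pos rfl]
      have L3 : lusR3 k x (k + 1) = x (k - 1) * x k / (x (k - 1) + x (k + 1)) := by
        unfold lusR3; rw [if_neg (by omega), if_neg (by omega), if_pos rfl]
      rw [e1, e1]
      simp only [L1, L2, L3, hjm, hjp, hjj, ← hii]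
      by_cases h1 : i k = a
      · have h2 : ¬ i (k - 1) = a := fun h => hne (h1.trans h.symm)
        simp only [if_pos h1, if_neg h2]
        field_simp
        ring
      · by_cases h2 : i (k - 1) = a
        · simp only [if_neg h1, if_pos h2]
          ring
        · simp only [if_neg h1, if_neg h2]
end

section
/- Let 𝐣 be a reduced word obtained from the reduced word 𝐢 for w₀ by a 2-move or a 3-move at position k, and let S: ℝ_{>0}^N → ℝ_{>0}^N be the corresponding string transition map. Then for every a ∈ [n], every λ ∈ ℝ_{>0}^{[n]} and every x ∈ ℝ_{>0}^N one has ν_{𝐣,a}(λ, S(x)) = ν_{𝐢,a}(λ, x), and likewise ν^∨_{𝐣,a}(λ, S(x)) = ν^∨_{𝐢,a}(λ, x). -/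
open Finset

private lemma prodZ_split (f : ℤ → ℝ) {a b c : ℤ} (h1 : a ≤ b) (h2 : b ≤ c) :
    ∏ x ∈ Finset.Ioc a c, f x = (∏ x ∈ Finset.Ioc a b, f x) * ∏ x ∈ Finset.Ioc b c, f x := by
  rw [← Finset.Ioc_union_Ioc_eq_Ioc h1 h2, Finset.prod_union]
  rw [Finset.disjoint_left]
  intro u hu hv
  simp only [Finset.mem_Ioc] at hu hv
  omega

private lemma sumZ_split (f : ℤ → ℝ) {a b c : ℤ} (h1 : a ≤ b) (h2 : b ≤ c) :
    ∑ x ∈ Finset.Ioc a c, f x = (∑ x ∈ Finset.Ioc a b, f x) + ∑ x ∈ Finset.Ioc b c, f x := by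
  rw [← Finset.Ioc_union_Ioc_eq_Ioc h1 h2, Finset.sum_union]
  rw [Finset.disjoint_left]
  intro u hu hv
  simp only [Finset.mem_Ioc] at hu hv
  omega

private lemma IocZ_single (k : ℤ) : Finset.Ioc k (k+1) = {k+1} := by
  ext u; simp only [Finset.mem_Ioc, Finset.mem_singleton]; omega

private lemma IocZ_pair (k : ℤ) : Finset.Ioc (k-1) (k+1) = {k, k+1} := by
  ext u; simp only [Finset.mem_Ioc, Finset.mem_insert, Finset.mem_singleton]; omega

private lemma prodZ_pair (f : ℤ → ℝ) (k : ℤ) :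
    ∏ x ∈ Finset.Ioc (k-1) (k+1), f x = f k * f (k+1) := by
  rw [IocZ_pair, Finset.prod_insert (by simp only [Finset.mem_insert, Finset.mem_singleton]; omega), Finset.prod_singleton]

private lemma sumZ_pair (f : ℤ → ℝ) (k : ℤ) :
    ∑ x ∈ Finset.Ioc (k-1) (k+1), f x = f k + f (k+1) := by
  rw [IocZ_pair, Finset.sum_insert (by simp only [Finset.mem_insert, Finset.mem_singleton]; omega), Finset.sum_singleton]

private lemma IccZ_eq_Ioc (N : ℕ) : Finset.Icc (1:ℤ) (N:ℤ) = Finset.Ioc 0 (N:ℤ) := by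
  ext u; simp only [Finset.mem_Icc, Finset.mem_Ioc]; omega

private lemma key2 {n N : ℕ} (c : Fin n → Fin n → ℤ) (hdiag : ∀ a, c a a = 2)
    (hsymm : ∀ a b, c a b = c b a)
    (i j : ℤ → Fin n) (k : ℤ) (h : IsTwoMove N c i j k) (a : Fin n) (x : ℤ → ℝ) :
    ∑ k' ∈ (Finset.Icc 1 (N:ℤ)).filter (fun k' => j k' = a),
      (swapMap k x k')⁻¹ * ∏ ℓ ∈ Finset.Ioc k' (N:ℤ), (swapMap k x ℓ) ^ (-(c (j ℓ) a))
    = ∑ k' ∈ (Finset.Icc 1 (N:ℤ)).filter (fun k' => i k' = a),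
      (x k')⁻¹ * ∏ ℓ ∈ Finset.Ioc k' (N:ℤ), (x ℓ) ^ (-(c (i ℓ) a)) := by
  obtain ⟨hk1, hkN, hout, hjk, hjk1, hc0⟩ := h
  set y := swapMap k x with hy
  have hyk : y k = x (k+1) := by simp [hy, swapMap]
  have hyk1 : y (k+1) = x k := by
    simp [hy, swapMap, show k+1 ≠ k by omega]
  have hyout : ∀ ℓ : ℤ, ℓ ≠ k → ℓ ≠ k+1 → y ℓ = x ℓ := by
    intro ℓ h1 h2; simp only [hy, swapMap]; rw [if_neg h1, if_neg h2]
  have hbd : i k ≠ i (k+1) := by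
    intro hh; rw [hh, hdiag] at hc0; omega
  have htail : ∀ k' : ℤ, k+1 ≤ k' →
      ∏ ℓ ∈ Finset.Ioc k' (N:ℤ), (y ℓ) ^ (-(c (j ℓ) a))
        = ∏ ℓ ∈ Finset.Ioc k' (N:ℤ), (x ℓ) ^ (-(c (i ℓ) a)) := by
    intro k' hk'
    refine Finset.prod_congr rfl ?_
    intro ℓ hℓ
    simp only [Finset.mem_Ioc] at hℓ
    rw [hyout ℓ (by omega) (by omega), hout ℓ (by omega) (by omega) (by omega) (by omega)]
  have hsplit : ∀ g : ℤ → ℝ, ∑ u ∈ Finset.Ioc (0:ℤ) (N:ℤ), g u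
      = ((∑ u ∈ Finset.Ioc (0:ℤ) (k-1), g u) + (g k + g (k+1)))
        + ∑ u ∈ Finset.Ioc (k+1) (N:ℤ), g u := by
    intro g
    rw [sumZ_split g (show (0:ℤ) ≤ k+1 by omega) (show (k+1:ℤ) ≤ (N:ℤ) by omega),
        sumZ_split g (show (0:ℤ) ≤ k-1 by omega) (show (k-1:ℤ) ≤ k+1 by omega), sumZ_pair]
  rw [Finset.sum_filter, Finset.sum_filter, IccZ_eq_Ioc, hsplit, hsplit]
  congr 1
  · congr 1
    · -- early positions
      refine Finset.sum_congr rfl ?_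
      intro u hu
      simp only [Finset.mem_Ioc] at hu
      rw [hout u (by omega) (by omega) (by omega) (by omega),
          hyout u (by omega) (by omega)]
      congr 1
      congr 1
      rw [prodZ_split _ (show u ≤ k-1 by omega) (show (k-1:ℤ) ≤ (N:ℤ) by omega),
          prodZ_split _ (show u ≤ k-1 by omega) (show (k-1:ℤ) ≤ (N:ℤ) by omega),
          prodZ_split _ (show (k-1:ℤ) ≤ k+1 by omega) (show (k+1:ℤ) ≤ (N:ℤ) by omega),
          prodZ_split _ (show (k-1:ℤ) ≤ k+1 by omega) (show (k+1:ℤ) ≤ (N:ℤ) by omega),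
          prodZ_pair, prodZ_pair, htail _ le_rfl]
      congr 1
      · refine Finset.prod_congr rfl ?_
        intro ℓ hℓ
        simp only [Finset.mem_Ioc] at hℓ
        rw [hyout ℓ (by omega) (by omega), hout ℓ (by omega) (by omega) (by omega) (by omega)]
      · congr 1
        rw [hyk, hyk1, hjk, hjk1]
        ring
    · -- middle positions
      rw [hjk, hjk1]
      have hT := htail (k+1) le_rfl
      have hFj_k : (y k)⁻¹ * ∏ ℓ ∈ Finset.Ioc k (N:ℤ), (y ℓ) ^ (-(c (j ℓ) a))
          = (x (k+1))⁻¹ * ((x k) ^ (-(c (i k) a)) *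
              ∏ ℓ ∈ Finset.Ioc (k+1) (N:ℤ), (x ℓ) ^ (-(c (i ℓ) a))) := by
        rw [hyk, prodZ_split _ (show k ≤ k+1 by omega) (show (k+1:ℤ) ≤ (N:ℤ) by omega),
            IocZ_single, Finset.prod_singleton, hyk1, hjk1, hT]
      have hFj_k1 : (y (k+1))⁻¹ * ∏ ℓ ∈ Finset.Ioc (k+1) (N:ℤ), (y ℓ) ^ (-(c (j ℓ) a))
          = (x k)⁻¹ * ∏ ℓ ∈ Finset.Ioc (k+1) (N:ℤ), (x ℓ) ^ (-(c (i ℓ) a)) := by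
        rw [hyk1, hT]
      have hFi_k : (x k)⁻¹ * ∏ ℓ ∈ Finset.Ioc k (N:ℤ), (x ℓ) ^ (-(c (i ℓ) a))
          = (x k)⁻¹ * ((x (k+1)) ^ (-(c (i (k+1)) a)) *
              ∏ ℓ ∈ Finset.Ioc (k+1) (N:ℤ), (x ℓ) ^ (-(c (i ℓ) a))) := by
        rw [prodZ_split _ (show k ≤ k+1 by omega) (show (k+1:ℤ) ≤ (N:ℤ) by omega),
            IocZ_single, Finset.prod_singleton]
      rw [hFj_k, hFj_k1, hFi_k]
      by_cases h1 : i k = a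
      · have h2 : ¬ (i (k+1) = a) := by rw [← h1]; exact fun hh => hbd hh.symm
        rw [if_pos h1, if_neg h2, if_pos h1, if_neg h2]
        have : (x (k+1)) ^ (-(c (i (k+1)) a)) = 1 := by
          rw [← h1, hsymm, hc0]; norm_num
        rw [this]
        ring
      · by_cases h2 : i (k+1) = a
        · rw [if_neg h1, if_pos h2, if_neg h1, if_pos h2]
          have : (x k) ^ (-(c (i k) a)) = 1 := by
            rw [← h2, hc0]; norm_num
          rw [this]
          ring
        · rw [if_neg h1, if_neg h2, if_neg h1, if_neg h2]
  · -- late positions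
    refine Finset.sum_congr rfl ?_
    intro u hu
    simp only [Finset.mem_Ioc] at hu
    rw [hout u (by omega) (by omega) (by omega) (by omega),
        hyout u (by omega) (by omega), htail u (by omega)]

private lemma IocZ_triple (k : ℤ) : Finset.Ioc (k-2) (k+1) = {k-1, k, k+1} := by
  ext u; simp only [Finset.mem_Ioc, Finset.mem_insert, Finset.mem_singleton]; omega

private lemma prodZ_triple (f : ℤ → ℝ) (k : ℤ) :
    ∏ x ∈ Finset.Ioc (k-2) (k+1), f x = f (k-1) * (f k * f (k+1)) := by
  rw [IocZ_triple, Finset.prod_insert (by simp only [Finset.mem_insert, Finset.mem_singleton]; omega),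
    Finset.prod_insert (by simp only [Finset.mem_insert, Finset.mem_singleton]; omega), Finset.prod_singleton]

private lemma sumZ_triple (f : ℤ → ℝ) (k : ℤ) :
    ∑ x ∈ Finset.Ioc (k-2) (k+1), f x = f (k-1) + (f k + f (k+1)) := by
  rw [IocZ_triple, Finset.sum_insert (by simp only [Finset.mem_insert, Finset.mem_singleton]; omega),
    Finset.sum_insert (by simp only [Finset.mem_insert, Finset.mem_singleton]; omega), Finset.sum_singleton]


private lemma key3 {n N : ℕ} (c : Fin n → Fin n → ℤ) (hdiag : ∀ a, c a a = 2)
    (hsymm : ∀ a b, c a b = c b a)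
    (i j : ℤ → Fin n) (k : ℤ) (h : IsThreeMove N c i j k) (a : Fin n) (x : ℤ → ℝ)
    (hx : ∀ ℓ ∈ Finset.Icc 1 (N:ℤ), 0 < x ℓ) :
    ∑ k' ∈ (Finset.Icc 1 (N:ℤ)).filter (fun k' => j k' = a),
      (strS3 k x k')⁻¹ * ∏ ℓ ∈ Finset.Ioc k' (N:ℤ), (strS3 k x ℓ) ^ (-(c (j ℓ) a))
    = ∑ k' ∈ (Finset.Icc 1 (N:ℤ)).filter (fun k' => i k' = a),
      (x k')⁻¹ * ∏ ℓ ∈ Finset.Ioc k' (N:ℤ), (x ℓ) ^ (-(c (i ℓ) a)) := by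
  obtain ⟨hk2, hkN, hout, hj1, hj3, hj2, hi13, hc⟩ := h
  rw [← hi13] at hc
  set y := strS3 k x with hy
  have hX1 : 0 < x (k-1) := hx _ (by simp only [Finset.mem_Icc]; omega)
  have hX2 : 0 < x k := hx _ (by simp only [Finset.mem_Icc]; omega)
  have hX3 : 0 < x (k+1) := hx _ (by simp only [Finset.mem_Icc]; omega)
  have hP : 0 < x (k-1) * x (k+1) + x k := by positivity
  have hy1 : y (k-1) = x k * x (k+1) / (x (k-1) * x (k+1) + x k) := by
    simp [hy, strS3]
  have hy2 : y k = x (k-1) * x (k+1) := by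
    simp [hy, strS3, show k ≠ k - 1 by omega]
  have hy3 : y (k+1) = (x (k-1) * x (k+1) + x k) / x (k+1) := by
    simp [hy, strS3, show k + 1 ≠ k - 1 by omega, show k + 1 ≠ k by omega]
  have hyout : ∀ ℓ : ℤ, ℓ ≠ k-1 → ℓ ≠ k → ℓ ≠ k+1 → y ℓ = x ℓ := by
    intro ℓ h1 h2 h3; simp only [hy, strS3]; rw [if_neg h1, if_neg h2, if_neg h3]
  have hy13 : y (k-1) * y (k+1) = x k := by
    rw [hy1, hy3]; field_simp
  have hbd : i (k-1) ≠ i k := by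
    intro hh; rw [← hh, hdiag] at hc; omega
  have htail : ∀ k' : ℤ, k+1 ≤ k' →
      ∏ ℓ ∈ Finset.Ioc k' (N:ℤ), (y ℓ) ^ (-(c (j ℓ) a))
        = ∏ ℓ ∈ Finset.Ioc k' (N:ℤ), (x ℓ) ^ (-(c (i ℓ) a)) := by
    intro k' hk'
    refine Finset.prod_congr rfl ?_
    intro ℓ hℓ
    simp only [Finset.mem_Ioc] at hℓ
    rw [hyout ℓ (by omega) (by omega) (by omega),
        hout ℓ (by omega) (by omega) (by omega) (by omega) (by omega)]
  have hsplit : ∀ g : ℤ → ℝ, ∑ u ∈ Finset.Ioc (0:ℤ) (N:ℤ), g u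
      = ((∑ u ∈ Finset.Ioc (0:ℤ) (k-2), g u) + (g (k-1) + (g k + g (k+1))))
        + ∑ u ∈ Finset.Ioc (k+1) (N:ℤ), g u := by
    intro g
    rw [sumZ_split g (show (0:ℤ) ≤ k+1 by omega) (show (k+1:ℤ) ≤ (N:ℤ) by omega),
        sumZ_split g (show (0:ℤ) ≤ k-2 by omega) (show (k-2:ℤ) ≤ k+1 by omega), sumZ_triple]
  have hmidprod : ∀ e1 e2 : ℤ,
      y (k-1) ^ e1 * (y k ^ e2 * y (k+1) ^ e1) = x (k-1) ^ e2 * (x k ^ e1 * x (k+1) ^ e2) := by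
    intro e1 e2
    rw [hy2, ← hy13, mul_zpow, mul_zpow]
    ring
  rw [Finset.sum_filter, Finset.sum_filter, IccZ_eq_Ioc, hsplit, hsplit]
  congr 1
  · congr 1
    · -- early positions
      refine Finset.sum_congr rfl ?_
      intro u hu
      simp only [Finset.mem_Ioc] at hu
      rw [hout u (by omega) (by omega) (by omega) (by omega) (by omega),
          hyout u (by omega) (by omega) (by omega)]
      congr 1
      congr 1
      rw [prodZ_split _ (show u ≤ k-2 by omega) (show (k-2:ℤ) ≤ (N:ℤ) by omega),
          prodZ_split _ (show u ≤ k-2 by omega) (show (k-2:ℤ) ≤ (N:ℤ) by omega),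
          prodZ_split _ (show (k-2:ℤ) ≤ k+1 by omega) (show (k+1:ℤ) ≤ (N:ℤ) by omega),
          prodZ_split _ (show (k-2:ℤ) ≤ k+1 by omega) (show (k+1:ℤ) ≤ (N:ℤ) by omega),
          prodZ_triple, prodZ_triple, htail _ le_rfl]
      congr 1
      · refine Finset.prod_congr rfl ?_
        intro ℓ hℓ
        simp only [Finset.mem_Ioc] at hℓ
        rw [hyout ℓ (by omega) (by omega) (by omega),
            hout ℓ (by omega) (by omega) (by omega) (by omega) (by omega)]
      · congr 1
        rw [hj1, hj2, hj3, ← hi13, hmidprod]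
    · -- middle positions
      rw [hj1, hj2, hj3, ← hi13]
      have hT := htail (k+1) le_rfl
      have eYk1 : ∏ ℓ ∈ Finset.Ioc (k-1) (N:ℤ), (y ℓ) ^ (-(c (j ℓ) a))
          = y k ^ (-(c (i (k-1)) a)) * (y (k+1) ^ (-(c (i k) a)) *
              ∏ ℓ ∈ Finset.Ioc (k+1) (N:ℤ), (x ℓ) ^ (-(c (i ℓ) a))) := by
        rw [prodZ_split _ (show (k-1:ℤ) ≤ k+1 by omega) (show (k+1:ℤ) ≤ (N:ℤ) by omega),
            prodZ_pair, hj2, hj3, hT, mul_assoc]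
      have eYk3 : ∏ ℓ ∈ Finset.Ioc (k+1) (N:ℤ), (y ℓ) ^ (-(c (j ℓ) a))
          = ∏ ℓ ∈ Finset.Ioc (k+1) (N:ℤ), (x ℓ) ^ (-(c (i ℓ) a)) := hT
      have eXk1 : ∏ ℓ ∈ Finset.Ioc (k-1) (N:ℤ), (x ℓ) ^ (-(c (i ℓ) a))
          = x k ^ (-(c (i k) a)) * (x (k+1) ^ (-(c (i (k-1)) a)) *
              ∏ ℓ ∈ Finset.Ioc (k+1) (N:ℤ), (x ℓ) ^ (-(c (i ℓ) a))) := by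
        rw [prodZ_split _ (show (k-1:ℤ) ≤ k+1 by omega) (show (k+1:ℤ) ≤ (N:ℤ) by omega),
            prodZ_pair, hi13, mul_assoc]
      have eXk : ∏ ℓ ∈ Finset.Ioc k (N:ℤ), (x ℓ) ^ (-(c (i ℓ) a))
          = x (k+1) ^ (-(c (i (k-1)) a)) *
              ∏ ℓ ∈ Finset.Ioc (k+1) (N:ℤ), (x ℓ) ^ (-(c (i ℓ) a)) := by
        rw [prodZ_split _ (show k ≤ k+1 by omega) (show (k+1:ℤ) ≤ (N:ℤ) by omega),
            IocZ_single, Finset.prod_singleton, hi13]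
      have eYk : ∏ ℓ ∈ Finset.Ioc k (N:ℤ), (y ℓ) ^ (-(c (j ℓ) a))
          = y (k+1) ^ (-(c (i k) a)) *
              ∏ ℓ ∈ Finset.Ioc (k+1) (N:ℤ), (x ℓ) ^ (-(c (i ℓ) a)) := by
        rw [prodZ_split _ (show k ≤ k+1 by omega) (show (k+1:ℤ) ≤ (N:ℤ) by omega),
            IocZ_single, Finset.prod_singleton, hj3, hT]
      rw [eYk1, eYk, eYk3, eXk1, eXk]
      set T := ∏ ℓ ∈ Finset.Ioc (k+1) (N:ℤ), (x ℓ) ^ (-(c (i ℓ) a)) with hTdef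
      by_cases hba : i (k-1) = a
      · have hda : ¬ (i k = a) := by rw [← hba]; exact fun hh => hbd hh.symm
        subst hba
        rw [if_pos rfl, if_neg hda, if_neg hda, if_pos rfl, if_neg hda, if_pos rfl]
        have e1 : y (k+1) ^ (-(c (i k) (i (k-1)))) = y (k+1) := by rw [hc]; norm_num
        have e2 : x k ^ (-(c (i k) (i (k-1)))) = x k := by rw [hc]; norm_num
        have e3 : (x (k+1)) ^ (-(c (i (k-1)) (i (k-1)))) = (x (k+1) * x (k+1))⁻¹ := by
          rw [hdiag]; rw [show (-(2:ℤ)) = -(2:ℤ) from rfl, zpow_neg, zpow_two]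
        rw [e1, e2, e3, hy2, hy3]
        field_simp
        ring
      · by_cases hda : i k = a
        · subst hda
          have hba' : ¬ (i (k-1) = i k) := hbd
          rw [if_pos rfl, if_neg hba', if_pos rfl, if_neg hba', if_pos rfl, if_neg hba']
          have e1 : y k ^ (-(c (i (k-1)) (i k))) = y k := by rw [hsymm, hc]; norm_num
          have e2 : x (k+1) ^ (-(c (i (k-1)) (i k))) = x (k+1) := by rw [hsymm, hc]; norm_num
          have e3 : y (k+1) ^ (-(c (i k) (i k))) = (y (k+1) * y (k+1))⁻¹ := by
            rw [hdiag, zpow_neg, zpow_two]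
          rw [e1, e2, e3, hy1, hy2, hy3]
          field_simp
          ring
        · rw [if_neg hba, if_neg hda, if_neg hba, if_neg hda, if_neg hba, if_neg hda]
  · -- late positions
    refine Finset.sum_congr rfl ?_
    intro u hu
    simp only [Finset.mem_Ioc] at hu
    rw [hout u (by omega) (by omega) (by omega) (by omega) (by omega),
        hyout u (by omega) (by omega) (by omega), htail u (by omega)]

/-- invariance of ν_{𝐢,a} and ν^∨_{𝐢,a} under string transition maps of
2-moves and 3-moves. -/
theorem statement1
    (n N : ℕ) (hn : 1 ≤ n)
    (c : Fin n → Fin n → ℤ)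
    (hdiag : ∀ a, c a a = 2)
    (hsymm : ∀ a b, c a b = c b a)
    (hoff : ∀ a b, a ≠ b → c a b = 0 ∨ c a b = -1)
    (W : Type) [Group W]
    (cs : CoxeterSystem (cartanToCoxeter c hsymm) W)
    (w0 : W)
    (hlong : ∀ w : W, cs.length w ≤ cs.length w0)
    (hN : cs.length w0 = N)
    (i : ℤ → Fin n)
    (hredi : cs.wordProd (wordOf N i) = w0)
    (j : ℤ → Fin n)
    (hredj : cs.wordProd (wordOf N j) = w0)
    (k : ℤ) (S : (ℤ → ℝ) → (ℤ → ℝ))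
    (hmove : (IsTwoMove N c i j k ∧ S = swapMap k) ∨
             (IsThreeMove N c i j k ∧ S = strS3 k)) :
    ∀ (a : Fin n) (lam : Fin n → ℝ) (x : ℤ → ℝ),
      (∀ b : Fin n, 0 < lam b) → (∀ ℓ ∈ Finset.Icc 1 (N : ℤ), 0 < x ℓ) →
      nuFun N c j lam (S x) a = nuFun N c i lam x a ∧
        nuDual N c j lam (S x) a = nuDual N c i lam x a := by
  intro a lam x hlam hx
  rcases hmove with ⟨h2, hS⟩ | ⟨h3, hS⟩
  · subst hS
    have hkey := key2 c hdiag hsymm i j k h2 a x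
    constructor
    · unfold nuFun; rw [hkey]
    · unfold nuDual; rw [hkey]
  · subst hS
    have hkey := key3 c hdiag hsymm i j k h3 a x hx
    constructor
    · unfold nuFun; rw [hkey]
    · unfold nuDual; rw [hkey]
end

section
/- Let 𝐢 be a reduced word for w₀. For all λ ∈ ℝ_{>0}^{[n]}, x ∈ ℝ_{>0}^{[N]} and every a ∈ [n], the Gross–Hacking–Keel–Kontsevich potential summands pull back under grι_𝐢 to the Lusztig-cone functions: W̃_{−a,𝐢}(grι_𝐢(λ,x)) = Σ_{k∈[N], i_k=a} x_k, and moreover W̃_{i_N,𝐢}(grι_𝐢(λ,x)) = λ_{(i_N)*} x_N^{-1}. -/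
open Finset

section StAux

variable {n N : ℕ}

private lemma mem_Mfin_of_Icc {k : ℤ} (h : k ∈ Finset.Icc 1 (N : ℤ)) : k ∈ Mfin n N :=
  Finset.mem_union_right _ h

private lemma cnt_mono {i : ℤ → Fin n} (a : Fin n) {k1 k2 : ℤ} (h1 : 1 ≤ k1)
    (hi1 : i k1 = a) (hi2 : i k2 = a) (hlt : k1 < k2) :
    ((Finset.Icc 1 k1).filter fun k => i k = a).card <
      ((Finset.Icc 1 k2).filter fun k => i k = a).card := by
  apply Finset.card_lt_card
  constructor
  · intro ℓ hℓ
    simp only [Finset.mem_filter, Finset.mem_Icc] at *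
    exact ⟨⟨hℓ.1.1, le_trans hℓ.1.2 hlt.le⟩, hℓ.2⟩
  · intro hsub
    have := hsub (Finset.mem_filter.mpr ⟨Finset.mem_Icc.mpr ⟨by omega, le_refl _⟩, hi2⟩)
    simp only [Finset.mem_filter, Finset.mem_Icc] at this
    omega

private lemma cnt_pos_self {i : ℤ → Fin n} (a : Fin n) {k : ℤ} (h1 : 1 ≤ k) (hi : i k = a) :
    1 ≤ ((Finset.Icc 1 k).filter fun ℓ => i ℓ = a).card := by
  have : k ∈ (Finset.Icc 1 k).filter fun ℓ => i ℓ = a :=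
    Finset.mem_filter.mpr ⟨Finset.mem_Icc.mpr ⟨h1, le_refl _⟩, hi⟩
  exact Finset.card_pos.mpr ⟨k, this⟩

/-- In the negative range, a letter determines the index. -/
private lemma neg_idx_unique {i : ℤ → Fin n} (hnegi : ∀ a : Fin n, i (negIdx a) = a)
    {k : ℤ} (hk1 : -(n : ℤ) ≤ k) (hk2 : k ≤ -1) {a : Fin n} (hik : i k = a) :
    k = negIdx a := by
  have hb : ((-k - 1).toNat : ℤ) = -k - 1 := Int.toNat_of_nonneg (by omega)
  have hbn : (-k - 1).toNat < n := by omega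
  have hknb : k = negIdx ⟨(-k - 1).toNat, hbn⟩ := by
    simp only [negIdx]
    omega
  have := hnegi ⟨(-k - 1).toNat, hbn⟩
  rw [← hknb] at this
  rw [this] at hik
  rw [hknb, hik]

private lemma kpi_in_Icc {kpi : ℤ → ℤ} {k : ℤ}
    (hmem : kpi k ∈ Mfin n N) (h1 : 1 ≤ kpi k) : kpi k ∈ Finset.Icc 1 (N : ℤ) := by
  rcases Finset.mem_union.mp hmem with h | h
  · simp only [Finset.mem_Icc] at h; omega
  · exact h

/-- `kp` of the `r`-th occurrence (r < m a) is the `(r+1)`-st occurrence. -/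
private lemma kp_pos_occ {i : ℤ → Fin n} {kpi : ℤ → ℤ} {m : Fin n → ℕ} {pos : Fin n → ℕ → ℤ}
    (hkpi : IsSucc N i kpi) (hpos : IsPos N i m pos)
    (a : Fin n) {r : ℕ} (hr1 : 1 ≤ r) (hr2 : r < m a) :
    kpi (pos a r) = pos a (r + 1) := by
  obtain ⟨hmemr, hir, hcr⟩ := hpos a r hr1 (le_of_lt hr2)
  obtain ⟨hmemr1, hir1, hcr1⟩ := hpos a (r + 1) (by omega) hr2
  have hr1N := Finset.mem_Icc.mp hmemr
  have hr1N' := Finset.mem_Icc.mp hmemr1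
  have hlt : pos a r < pos a (r + 1) := by
    rcases lt_trichotomy (pos a r) (pos a (r + 1)) with h | h | h
    · exact h
    · rw [h, hcr1] at hcr; omega
    · have := cnt_mono a hr1N'.1 hir1 hir h
      omega
  obtain ⟨hklt, hcase⟩ := hkpi (pos a r) (mem_Mfin_of_Icc hmemr)
  rcases hcase with ⟨_, hall⟩ | ⟨hmem, hikp, hmin⟩
  · exact absurd (hir1.trans hir.symm) (hall _ (mem_Mfin_of_Icc hmemr1) hlt)
  · have hle : kpi (pos a r) ≤ pos a (r + 1) :=
      hmin _ (mem_Mfin_of_Icc hmemr1) hlt (hir1.trans hir.symm)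
    have hkIcc : kpi (pos a r) ∈ Finset.Icc 1 (N : ℤ) := kpi_in_Icc hmem (by omega)
    rcases lt_or_eq_of_le hle with h | h
    · exfalso
      have hik : i (kpi (pos a r)) = a := hikp.trans hir
      have h1 := cnt_mono a hr1N.1 hir hik hklt
      have h2 := cnt_mono a (Finset.mem_Icc.mp hkIcc).1 hik hir1 h
      omega
    · exact h

/-- `kp` of the negative index is the first occurrence (when `m a ≥ 1`). -/
private lemma kp_neg_occ {i : ℤ → Fin n} {kpi : ℤ → ℤ} {m : Fin n → ℕ} {pos : Fin n → ℕ → ℤ}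
    (hkpi : IsSucc N i kpi) (hpos : IsPos N i m pos)
    (hnegi : ∀ a : Fin n, i (negIdx a) = a)
    (a : Fin n) (hma : 1 ≤ m a) :
    kpi (negIdx a) = pos a 1 := by
  obtain ⟨hmem1, hi1, hc1⟩ := hpos a 1 le_rfl hma
  have hp1N := Finset.mem_Icc.mp hmem1
  have hnegmem : negIdx a ∈ Mfin n N := by
    apply Finset.mem_union_left
    simp only [Finset.mem_Icc, negIdx]
    have := a.isLt
    omega
  have hia : i (negIdx a) = a := hnegi a
  have hneglt : negIdx a < pos a 1 := by
    simp only [negIdx]; omega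
  obtain ⟨hklt, hcase⟩ := hkpi (negIdx a) hnegmem
  rcases hcase with ⟨_, hall⟩ | ⟨hmem, hikp, hmin⟩
  · exact absurd (hi1.trans hia.symm) (hall _ (mem_Mfin_of_Icc hmem1) hneglt)
  · have hik : i (kpi (negIdx a)) = a := hikp.trans hia
    -- kpi (negIdx a) is not negative
    have hge1 : 1 ≤ kpi (negIdx a) := by
      by_contra hcon
      rcases Finset.mem_union.mp hmem with h | h
      · simp only [Finset.mem_Icc] at h
        have := neg_idx_unique hnegi h.1 h.2 hik
        omega
      · simp only [Finset.mem_Icc] at h; omega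
    have hle : kpi (negIdx a) ≤ pos a 1 :=
      hmin _ (mem_Mfin_of_Icc hmem1) hneglt (hi1.trans hia.symm)
    have hkIcc : kpi (negIdx a) ∈ Finset.Icc 1 (N : ℤ) := kpi_in_Icc hmem hge1
    rcases lt_or_eq_of_le hle with h | h
    · exfalso
      have h1 := cnt_pos_self a hge1 hik
      have h2 := cnt_mono a hge1 hik hi1 h
      omega
    · exact h

/-- `kp N = N + 1`. -/
private lemma kp_last_idx {i : ℤ → Fin n} {kpi : ℤ → ℤ}
    (hkpi : IsSucc N i kpi) (hN1 : 1 ≤ N) : kpi (N : ℤ) = (N : ℤ) + 1 := by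
  have hmemN : (N : ℤ) ∈ Mfin n N :=
    mem_Mfin_of_Icc (Finset.mem_Icc.mpr ⟨by exact_mod_cast hN1, le_refl _⟩)
  obtain ⟨hklt, hcase⟩ := hkpi (N : ℤ) hmemN
  rcases hcase with ⟨h, _⟩ | ⟨hmem, _, _⟩
  · exact h
  · exfalso
    rcases Finset.mem_union.mp hmem with h | h <;>
      (simp only [Finset.mem_Icc] at h; omega)

end StAux

/-- pullback of the GHKK potential summands under grι_𝐢 gives the
Lusztig-cone functions. -/
theorem statement4
    (n N : ℕ) (hn : 1 ≤ n)
    (c : Fin n → Fin n → ℤ)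
    (hdiag : ∀ a, c a a = 2)
    (hsymm : ∀ a b, c a b = c b a)
    (hoff : ∀ a b, a ≠ b → c a b = 0 ∨ c a b = -1)
    (W : Type) [Group W]
    (cs : CoxeterSystem (cartanToCoxeter c hsymm) W)
    (w0 : W)
    (hlong : ∀ w : W, cs.length w ≤ cs.length w0)
    (hN : cs.length w0 = N)
    (i : ℤ → Fin n)
    (hredi : cs.wordProd (wordOf N i) = w0)
    (hnegi : ∀ a : Fin n, i (negIdx a) = a)
    (kpi : ℤ → ℤ) (hkpi : IsSucc N i kpi)
    (m : Fin n → ℕ) (hm : IsMult N i m)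
    (pos : Fin n → ℕ → ℤ) (hpos : IsPos N i m pos)
    (star : Fin n → Fin n)
    (hstar : ∀ a : Fin n, w0 * cs.simple a * w0⁻¹ = cs.simple (star a))
    : ∀ (a : Fin n) (lam : Fin n → ℝ) (x : ℤ → ℝ),
      (∀ b : Fin n, 0 < lam b) → (∀ ℓ ∈ Finset.Icc 1 (N : ℤ), 0 < x ℓ) →
      WNeg m pos (grIota N star i kpi lam x) a =
        ∑ k ∈ (Finset.Icc 1 (N : ℤ)).filter (fun k => i k = a), x k ∧
      WLast N (grIota N star i kpi lam x) = lam (star (i (N : ℤ))) * (x (N : ℤ))⁻¹ := by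
  intro a lam x hlam hx
  have hN1 : 1 ≤ N := by
    have h := hlong (cs.simple ⟨0, hn⟩)
    rw [hN, cs.length_simple] at h
    exact h
  have hxne : ∀ k ∈ Finset.Icc 1 (N : ℤ), x k ≠ 0 := fun k hk => (hx k hk).ne'
  constructor
  · -- WNeg part
    have key : ∀ k, k < m a → (∏ ℓ ∈ Finset.range (k + 1),
        (if ℓ = 0 then grIota N star i kpi lam x (negIdx a)
          else grIota N star i kpi lam x (pos a ℓ))⁻¹) = x (pos a (k + 1)) := by
      intro k
      induction k with
      | zero =>
        intro hk
        rw [zero_add, Finset.prod_range_one, if_pos rfl]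
        simp only [grIota]
        rw [if_pos (show negIdx a < 0 by simp only [negIdx]; omega)]
        rw [kp_neg_occ hkpi hpos hnegi a (by omega), inv_inv]
      | succ k ih =>
        intro hk
        rw [Finset.prod_range_succ, ih (by omega), if_neg (by omega : ¬ (k + 1 = 0))]
        have h1 : kpi (pos a (k + 1)) = pos a (k + 2) :=
          kp_pos_occ hkpi hpos a (by omega) (by omega)
        obtain ⟨hmem1, -, -⟩ := hpos a (k + 1) (by omega) (by omega)
        obtain ⟨hmem2, -, -⟩ := hpos a (k + 2) (by omega) hk
        have hge : ¬ pos a (k + 1) < 0 := by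
          have := (Finset.mem_Icc.mp hmem1).1; omega
        have hne1 := hxne _ hmem1
        have hne2 := hxne _ hmem2
        simp only [grIota]
        rw [if_neg hge, h1, if_pos (Finset.mem_Icc.mp hmem2).2]
        field_simp
    unfold WNeg
    rw [Finset.sum_congr rfl (fun k hk => key k (Finset.mem_range.mp hk))]
    refine Finset.sum_bij (fun k _ => pos a (k + 1)) ?_ ?_ ?_ ?_
    · intro k hk
      have hk' := Finset.mem_range.mp hk
      obtain ⟨hmem, hi1, -⟩ := hpos a (k + 1) (by omega) (by omega)
      exact Finset.mem_filter.mpr ⟨hmem, hi1⟩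
    · intro k1 hk1 k2 hk2 heq
      obtain ⟨hmemA, hiA, hcA⟩ := hpos a (k1 + 1) (by omega) (by have := Finset.mem_range.mp hk1; omega)
      obtain ⟨hmemB, hiB, hcB⟩ := hpos a (k2 + 1) (by omega) (by have := Finset.mem_range.mp hk2; omega)
      have heq' : pos a (k1 + 1) = pos a (k2 + 1) := heq
      rw [heq', hcB] at hcA
      omega
    · intro b hb
      obtain ⟨hbmem, hib⟩ := Finset.mem_filter.mp hb
      have hb1 := (Finset.mem_Icc.mp hbmem).1
      set r := ((Finset.Icc 1 b).filter fun ℓ => i ℓ = a).card with hr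
      have hr1 : 1 ≤ r := cnt_pos_self a hb1 hib
      have hrm : r ≤ m a := by
        rw [hm a]
        apply Finset.card_le_card
        intro ℓ hℓ
        have hb2 := (Finset.mem_Icc.mp hbmem).2
        simp only [Finset.mem_filter, Finset.mem_Icc] at hℓ ⊢
        exact ⟨⟨hℓ.1.1, by omega⟩, hℓ.2⟩
      obtain ⟨hmem, hi1, hc⟩ := hpos a r hr1 hrm
      have heq : pos a r = b := by
        rcases lt_trichotomy (pos a r) b with h | h | h
        · have := cnt_mono a (Finset.mem_Icc.mp hmem).1 hi1 hib h
          omega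
        · exact h
        · have := cnt_mono a hb1 hib hi1 h
          omega
      refine ⟨r - 1, Finset.mem_range.mpr (by omega), ?_⟩
      show pos a (r - 1 + 1) = b
      rw [Nat.sub_add_cancel hr1, heq]
    · intro k hk
      rfl
  · -- WLast part
    have hk := kp_last_idx (n := n) hkpi hN1
    simp only [WLast, grIota, hk]
    rw [if_neg (by omega : ¬ ((N : ℤ) < 0)), if_neg (by omega : ¬ ((N : ℤ) + 1 ≤ (N : ℤ)))]
    rw [mul_inv, inv_inv, mul_comm]
end

section
/- Let 𝐢 be a reduced word for w₀. For all λ ∈ ℝ_{>0}^{[n]}, x ∈ ℝ_{>0}^{[N]} and every a ∈ [n], the Gross–Hacking–Keel–Kontsevich potential summands pull back under gr𝒞_𝐢 to the graded-string-cone functions: W̃_{−a,𝐢}(gr𝒞_𝐢(λ,x)) = ν_{𝐢,a}(λ,x), and moreover W̃_{i_N,𝐢}(gr𝒞_𝐢(λ,x)) = x_N. -/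
open Finset

private lemma zp2_aux (x : ℝ) (hx : x ≠ 0) : x ^ (-2 : ℤ) * x = x⁻¹ := by
  have h : x ^ (-2 : ℤ) * x ^ (1 : ℤ) = x ^ (-1 : ℤ) := by rw [← zpow_add₀ hx]; norm_num
  simpa using h

private lemma prod_Ioc_split (f : ℤ → ℝ) {p q N : ℤ} (h1 : p ≤ q) (h2 : q ≤ N) :
    ∏ ℓ ∈ Finset.Ioc p N, f ℓ = (∏ ℓ ∈ Finset.Ioc p q, f ℓ) * ∏ ℓ ∈ Finset.Ioc q N, f ℓ := by
  rw [← Finset.prod_union (by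
    rw [Finset.disjoint_left]; intro t ht ht'
    simp only [Finset.mem_Ioc] at *; omega), Finset.Ioc_union_Ioc_eq_Ioc h1 h2]

private lemma cnt_mono_aux {n : ℕ} (i : ℤ → Fin n) (a : Fin n) {u v : ℤ} (h : u ≤ v) :
    ((Finset.Icc 1 u).filter fun k => i k = a).card ≤
      ((Finset.Icc 1 v).filter fun k => i k = a).card :=
  Finset.card_le_card (Finset.filter_subset_filter _ (Finset.Icc_subset_Icc_right h))

private lemma cnt_lt_aux {n : ℕ} (i : ℤ → Fin n) (a : Fin n) {u v : ℤ} (huv : u < v)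
    (hv1 : 1 ≤ v) (hiv : i v = a) :
    ((Finset.Icc 1 u).filter fun k => i k = a).card <
      ((Finset.Icc 1 v).filter fun k => i k = a).card := by
  have hnot : v ∉ (Finset.Icc 1 u).filter fun k => i k = a := by
    simp only [Finset.mem_filter, Finset.mem_Icc]
    intro h; omega
  have hsub : insert v ((Finset.Icc 1 u).filter fun k => i k = a) ⊆
      (Finset.Icc 1 v).filter fun k => i k = a := by
    intro t ht
    simp only [Finset.mem_insert, Finset.mem_filter, Finset.mem_Icc] at *
    rcases ht with rfl | ⟨⟨h1, h2⟩, h3⟩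
    · exact ⟨⟨hv1, le_refl _⟩, hiv⟩
    · exact ⟨⟨h1, by omega⟩, h3⟩
  have := Finset.card_le_card hsub
  rw [Finset.card_insert_of_notMem hnot] at this
  omega

/-- The `ν`-summand function. -/
private noncomputable def Tfun {n : ℕ} (N : ℕ) (c : Fin n → Fin n → ℤ) (i : ℤ → Fin n)
    (a : Fin n) (x : ℤ → ℝ) (k : ℤ) : ℝ :=
  (x k)⁻¹ * ∏ ℓ ∈ Finset.Ioc k (N : ℤ), x ℓ ^ (-(c (i ℓ) a))

/-- pullback of the GHKK potential summands under gr𝒞_𝐢 gives the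
graded-string-cone functions. -/
theorem statement6
    (n N : ℕ) (hn : 1 ≤ n)
    (c : Fin n → Fin n → ℤ)
    (hdiag : ∀ a, c a a = 2)
    (hsymm : ∀ a b, c a b = c b a)
    (hoff : ∀ a b, a ≠ b → c a b = 0 ∨ c a b = -1)
    (W : Type) [Group W]
    (cs : CoxeterSystem (cartanToCoxeter c hsymm) W)
    (w0 : W)
    (hlong : ∀ w : W, cs.length w ≤ cs.length w0)
    (hN : cs.length w0 = N)
    (i : ℤ → Fin n)
    (hredi : cs.wordProd (wordOf N i) = w0)
    (hnegi : ∀ a : Fin n, i (negIdx a) = a)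
    (kpi : ℤ → ℤ) (hkpi : IsSucc N i kpi)
    (m : Fin n → ℕ) (hm : IsMult N i m)
    (pos : Fin n → ℕ → ℤ) (hpos : IsPos N i m pos)
    : ∀ (a : Fin n) (lam : Fin n → ℝ) (x : ℤ → ℝ),
      (∀ b : Fin n, 0 < lam b) → (∀ ℓ ∈ Finset.Icc 1 (N : ℤ), 0 < x ℓ) →
      WNeg m pos (grC N c i kpi pos lam x) a = nuFun N c i lam x a ∧
      WLast N (grC N c i kpi pos lam x) = x (N : ℤ) := by
  intro a lam x hlam hx
  have hN1 : 1 ≤ N := by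
    have h1 := hlong (cs.simple ⟨0, hn⟩)
    rw [cs.length_simple, hN] at h1
    exact h1
  have hxne : ∀ ℓ : ℤ, 1 ≤ ℓ → ℓ ≤ (N : ℤ) → x ℓ ≠ 0 := fun ℓ h1 h2 =>
    (hx ℓ (Finset.mem_Icc.mpr ⟨h1, h2⟩)).ne'
  set g := grC N c i kpi pos lam x with hg
  have hMfin : ∀ k : ℤ, 1 ≤ k → k ≤ (N : ℤ) → k ∈ Mfin n N := by
    intro k h1 h2
    unfold Mfin
    simp only [Finset.mem_union, Finset.mem_Icc]
    omega
  refine ⟨?_, ?_⟩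
  swap
  · -- WLast
    obtain ⟨hlt, _⟩ := hkpi (N : ℤ) (hMfin _ (by exact_mod_cast hN1) le_rfl)
    have h1 : ¬ ((N : ℤ) < 0) := by omega
    have h2 : ¬ (kpi (N : ℤ) ≤ (N : ℤ)) := by omega
    rw [WLast, hg]
    unfold grC
    rw [if_neg h1, if_neg h2, Finset.Ioc_self, Finset.prod_empty, mul_one, inv_inv]
  -- WNeg = nuFun
  set ma := m a with hmadef
  have hpmem : ∀ r : ℕ, 1 ≤ r → r ≤ ma → 1 ≤ pos a r ∧ pos a r ≤ (N : ℤ) := by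
    intro r h1 h2
    have := (hpos a r h1 h2).1
    rw [Finset.mem_Icc] at this
    exact this
  have hpi : ∀ r : ℕ, 1 ≤ r → r ≤ ma → i (pos a r) = a := fun r h1 h2 => (hpos a r h1 h2).2.1
  have hpcnt : ∀ r : ℕ, 1 ≤ r → r ≤ ma →
      ((Finset.Icc 1 (pos a r)).filter fun k => i k = a).card = r :=
    fun r h1 h2 => (hpos a r h1 h2).2.2
  rcases Nat.eq_zero_or_pos ma with hma0 | hma1
  · -- m a = 0
    have hfe : (Finset.Icc 1 (N : ℤ)).filter (fun k => i k = a) = ∅ := by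
      have := hm a
      rw [← hmadef, hma0] at this
      exact Finset.card_eq_zero.mp this.symm
    rw [WNeg, nuFun, ← hmadef, hma0, hfe]
    simp
  -- m a ≥ 1
  have hplt : ∀ r : ℕ, 1 ≤ r → r + 1 ≤ ma → pos a r < pos a (r + 1) := by
    intro r h1 h2
    by_contra h
    push_neg at h
    have h3 := cnt_mono_aux i a h
    rw [hpcnt r h1 (by omega), hpcnt (r + 1) (by omega) h2] at h3
    omega
  have hkp1 : ∀ r : ℕ, 1 ≤ r → r + 1 ≤ ma → kpi (pos a r) = pos a (r + 1) := by
    intro r h1 h2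
    have hpr := hpmem r h1 (by omega)
    have hpr1 := hpmem (r + 1) (by omega) h2
    have hlt := hplt r h1 h2
    obtain ⟨hklt, hcase⟩ := hkpi (pos a r) (hMfin _ hpr.1 hpr.2)
    have hia : i (pos a (r + 1)) = i (pos a r) := by
      rw [hpi (r + 1) (by omega) h2, hpi r h1 (by omega)]
    rcases hcase with ⟨_, hnone⟩ | ⟨hmem, hieq, hmin⟩
    · exact absurd hia (hnone (pos a (r + 1)) (hMfin _ hpr1.1 hpr1.2) hlt)
    · have hle : kpi (pos a r) ≤ pos a (r + 1) :=
        hmin _ (hMfin _ hpr1.1 hpr1.2) hlt hia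
      rcases lt_or_eq_of_le hle with hlt2 | heq
      · exfalso
        have hq1 : 1 ≤ kpi (pos a r) := by omega
        have hiq : i (kpi (pos a r)) = a := by rw [hieq, hpi r h1 (by omega)]
        have c1 := cnt_lt_aux i a hklt hq1 hiq
        have c2 := cnt_lt_aux i a hlt2 hpr1.1 (hpi (r + 1) (by omega) h2)
        rw [hpcnt r h1 (by omega)] at c1
        rw [hpcnt (r + 1) (by omega) h2] at c2
        omega
      · exact heq
  -- base step
  have hneglt : negIdx a < 0 := by
    unfold negIdx
    have : (0 : ℤ) ≤ ((a : ℕ) : ℤ) := Int.natCast_nonneg _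
    omega
  have hp1m := hpmem 1 le_rfl hma1
  have hgneg : (g (negIdx a))⁻¹ = lam a * Tfun N c i a x (pos a 1) := by
    rw [hg]
    unfold grC Tfun
    rw [if_pos hneglt, hnegi a]
    have hfilt : (Finset.Icc 1 (N : ℤ)).filter (fun ℓ => pos a 1 < ℓ)
        = Finset.Ioc (pos a 1) (N : ℤ) := by
      ext t
      simp only [Finset.mem_filter, Finset.mem_Icc, Finset.mem_Ioc]
      have := hp1m.1
      constructor
      · rintro ⟨⟨_, h2⟩, h3⟩; exact ⟨h3, h2⟩
      · rintro ⟨h3, h2⟩; exact ⟨⟨by omega, h2⟩, h3⟩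
    rw [hfilt, mul_inv, mul_inv, inv_inv, ← Finset.prod_inv_distrib]
    simp only [← zpow_neg]
    ring
  have hstep : ∀ r : ℕ, 1 ≤ r → r + 1 ≤ ma →
      Tfun N c i a x (pos a r) * (g (pos a r))⁻¹ = Tfun N c i a x (pos a (r + 1)) := by
    intro r h1 h2
    have hpr := hpmem r h1 (by omega)
    have hpr1 := hpmem (r + 1) (by omega) h2
    have hlt := hplt r h1 h2
    have hkp := hkp1 r h1 h2
    have hgp : g (pos a r) = (x (pos a r))⁻¹ * (x (pos a (r + 1)))⁻¹ *
        ∏ ℓ ∈ Finset.Ioo (pos a r) (pos a (r + 1)), x ℓ ^ (-(c (i ℓ) a)) := by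
      rw [hg]
      unfold grC
      rw [if_neg (by omega), hkp, if_pos hpr1.2, hpi r h1 (by omega)]
    rw [hgp]
    unfold Tfun
    rw [prod_Ioc_split _ hlt.le hpr1.2, ← Finset.Ioo_insert_right hlt,
      Finset.prod_insert (by simp), hpi (r + 1) (by omega) h2, hdiag]
    have hxp := hxne (pos a r) hpr.1 hpr.2
    have hxq := hxne (pos a (r + 1)) hpr1.1 hpr1.2
    have hP1 : (∏ ℓ ∈ Finset.Ioo (pos a r) (pos a (r + 1)), x ℓ ^ (-(c (i ℓ) a))) ≠ 0 := by
      rw [Finset.prod_ne_zero_iff]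
      intro ℓ hℓ
      rw [Finset.mem_Ioo] at hℓ
      exact zpow_ne_zero _ (hxne ℓ (by omega) (by omega))
    rw [mul_inv, mul_inv, inv_inv, inv_inv]
    have h2q : x (pos a (r + 1)) ^ (-(2 : ℤ)) * x (pos a (r + 1)) = (x (pos a (r + 1)))⁻¹ := by
      simpa using zp2_aux (x (pos a (r + 1))) hxq
    calc (x (pos a r))⁻¹ *
          (x (pos a (r + 1)) ^ (-(2 : ℤ)) *
            (∏ ℓ ∈ Finset.Ioo (pos a r) (pos a (r + 1)), x ℓ ^ (-(c (i ℓ) a))) *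
            ∏ ℓ ∈ Finset.Ioc (pos a (r + 1)) (N : ℤ), x ℓ ^ (-(c (i ℓ) a))) *
          (x (pos a r) * x (pos a (r + 1)) *
            (∏ ℓ ∈ Finset.Ioo (pos a r) (pos a (r + 1)), x ℓ ^ (-(c (i ℓ) a)))⁻¹)
        = ((x (pos a r))⁻¹ * x (pos a r)) *
          (x (pos a (r + 1)) ^ (-(2 : ℤ)) * x (pos a (r + 1))) *
          ((∏ ℓ ∈ Finset.Ioo (pos a r) (pos a (r + 1)), x ℓ ^ (-(c (i ℓ) a))) *
            (∏ ℓ ∈ Finset.Ioo (pos a r) (pos a (r + 1)), x ℓ ^ (-(c (i ℓ) a)))⁻¹) *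
          ∏ ℓ ∈ Finset.Ioc (pos a (r + 1)) (N : ℤ), x ℓ ^ (-(c (i ℓ) a)) := by ring
      _ = (x (pos a (r + 1)))⁻¹ * ∏ ℓ ∈ Finset.Ioc (pos a (r + 1)) (N : ℤ), x ℓ ^ (-(c (i ℓ) a)) := by
          rw [inv_mul_cancel₀ hxp, mul_inv_cancel₀ hP1, h2q, one_mul, mul_one]
  have hQ : ∀ k : ℕ, k < ma →
      (∏ ℓ ∈ Finset.range (k + 1),
        (if ℓ = 0 then g (negIdx a) else g (pos a ℓ))⁻¹) = lam a * Tfun N c i a x (pos a (k + 1)) := by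
    intro k
    induction k with
    | zero =>
      intro _
      rw [Finset.prod_range_one, if_pos rfl, hgneg]
    | succ k ih =>
      intro hk
      rw [Finset.prod_range_succ, ih (by omega), if_neg (Nat.succ_ne_zero k), mul_assoc,
        hstep (k + 1) (by omega) (by omega)]
  rw [WNeg, nuFun, ← hmadef]
  have hsum1 : ∑ k ∈ Finset.range ma, ∏ ℓ ∈ Finset.range (k + 1),
      (if ℓ = 0 then g (negIdx a) else g (pos a ℓ))⁻¹
      = ∑ k ∈ Finset.range ma, lam a * Tfun N c i a x (pos a (k + 1)) :=
    Finset.sum_congr rfl fun k hk => hQ k (Finset.mem_range.mp hk)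
  rw [hsum1, ← Finset.mul_sum]
  congr 1
  refine Finset.sum_bij (fun k _ => pos a (k + 1)) ?_ ?_ ?_ ?_
  · intro k hk
    rw [Finset.mem_range] at hk
    have h1 := hpmem (k + 1) (by omega) (by omega)
    rw [Finset.mem_filter, Finset.mem_Icc]
    exact ⟨⟨h1.1, h1.2⟩, hpi (k + 1) (by omega) (by omega)⟩
  · intro k1 hk1 k2 hk2 heq
    rw [Finset.mem_range] at hk1 hk2
    have heq' : pos a (k1 + 1) = pos a (k2 + 1) := heq
    have c1 := hpcnt (k1 + 1) (by omega) (by omega)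
    have c2 := hpcnt (k2 + 1) (by omega) (by omega)
    rw [heq', c2] at c1
    omega
  · intro k hk
    rw [Finset.mem_filter, Finset.mem_Icc] at hk
    obtain ⟨⟨hk1, hk2⟩, hik⟩ := hk
    set r : ℕ := ((Finset.Icc 1 k).filter fun ℓ => i ℓ = a).card with hr
    have hr1 : 1 ≤ r := by
      rw [hr]
      refine Finset.card_pos.mpr ⟨k, ?_⟩
      rw [Finset.mem_filter, Finset.mem_Icc]
      exact ⟨⟨hk1, le_rfl⟩, hik⟩
    have hrma : r ≤ ma := by
      have := cnt_mono_aux i a hk2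
      rw [← hr] at this
      rw [hmadef, hm a]
      exact this
    have hpk : pos a r = k := by
      rcases lt_trichotomy (pos a r) k with h | h | h
      · exfalso
        have := cnt_lt_aux i a h hk1 hik
        rw [hpcnt r hr1 hrma, ← hr] at this
        omega
      · exact h
      · exfalso
        have := cnt_lt_aux i a h (hpmem r hr1 hrma).1 (hpi r hr1 hrma)
        rw [hpcnt r hr1 hrma, ← hr] at this
        omega
    refine ⟨r - 1, Finset.mem_range.mpr (by omega), ?_⟩
    show pos a (r - 1 + 1) = k
    rw [show r - 1 + 1 = r by omega]
    exact hpk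
  · intro k hk
    rfl
end
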